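/- Let V be a real symmetric 2n×2n matrix with V + iΩ_n ≻ 0, let X be a real 2m×2n matrix of rank 2m (2m ≤ 2n), and let Y be a real symmetric 2m×2m matrix with Y + iΩ_m − iXΩ_nXᵀ ⪰ 0. Then XVXᵀ + Y + iΩ_m ≻ 0; that is, the output covariance matrix V_N = XVXᵀ + Y of the Gaussian channel satisfies the strict uncertainty relation (the output state is faithful). -/

import Mathlib

noncomputable section
open Matrix
open scoped ComplexOrder

/-- The standard `2n × 2n` symplectic form matrix `Ω = [[0, I], [-I, 0]]`. -/
def Om (n : ℕ) : Matrix (Fin n ⊕ Fin n) (Fin n ⊕ Fin n) ℝ :=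
  Matrix.fromBlocks 0 1 (-1) 0

/-- Complexification of a real matrix. -/
def cm {k l : Type*} (A : Matrix k l ℝ) : Matrix k l ℂ := A.map Complex.ofReal

lemma cm_conjTranspose {k l : Type*} (A : Matrix k l ℝ) : (cm A)ᴴ = cm Aᵀ := by
  ext i j
  simp [cm, conjTranspose_apply, transpose_apply]

lemma cm_transpose {k l : Type*} (A : Matrix k l ℝ) : (cm A)ᵀ = cm Aᵀ := by
  ext i j
  simp [cm]

lemma cm_mul {k l o : Type*} [Fintype l] (A : Matrix k l ℝ) (B : Matrix l o ℝ) :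
    cm (A * B) = cm A * cm B :=
  Matrix.map_mul (f := Complex.ofRealHom)

lemma cm_det {k : Type*} [Fintype k] [DecidableEq k] (A : Matrix k k ℝ) :
    (cm A).det = (A.det : ℂ) :=
  (RingHom.map_det Complex.ofRealHom A).symm

lemma cm_add {k l : Type*} (A B : Matrix k l ℝ) : cm (A + B) = cm A + cm B := by
  ext i j; simp [cm]

set_option maxHeartbeats 800000 in
/-- A posdef matrix conjugated by a matrix with injective `Bᴴ *ᵥ ·` is posdef. -/
lemma posDef_mul_mul_conjTranspose {k o : Type*} [Fintype k] [Fintype o]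
    {A : Matrix k k ℂ} (hA : A.PosDef) (B : Matrix o k ℂ)
    (hB : Function.Injective (Bᴴ.mulVec)) : (B * A * Bᴴ).PosDef := by
  rw [posDef_iff_dotProduct_mulVec]
  constructor
  · exact isHermitian_mul_mul_conjTranspose B hA.1
  · intro x hx
    have hBx : Bᴴ *ᵥ x ≠ 0 := fun h => hx (hB (by simpa using h))
    simpa only [star_mulVec, dotProduct_mulVec, vecMul_vecMul, conjTranspose_conjTranspose] using hA.dotProduct_mulVec_pos hBx

theorem output_state_faithful (n m : ℕ) (hmn : m ≤ n)
    (V : Matrix (Fin n ⊕ Fin n) (Fin n ⊕ Fin n) ℝ)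
    (X : Matrix (Fin m ⊕ Fin m) (Fin n ⊕ Fin n) ℝ)
    (Y : Matrix (Fin m ⊕ Fin m) (Fin m ⊕ Fin m) ℝ)
    (hV : V.IsSymm)
    (hVpd : (cm V + Complex.I • cm (Om n)).PosDef)
    (hXrank : X.rank = 2 * m)
    (hY : Y.IsSymm)
    (hYcp : (cm Y + Complex.I • cm (Om m)
        - Complex.I • (cm X * cm (Om n) * (cm X)ᵀ)).PosSemidef) :
    (cm (X * V * Xᵀ + Y) + Complex.I • cm (Om m)).PosDef := by
  classical
  -- X * Xᵀ is invertible over ℝ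
  have hcard : Fintype.card (Fin m ⊕ Fin m) = 2 * m := by
    simp [Fintype.card_sum, two_mul]
  have hrank : (X * Xᵀ).rank = Fintype.card (Fin m ⊕ Fin m) := by
    rw [Matrix.rank_self_mul_transpose, hXrank, hcard]
  have hunit : IsUnit (X * Xᵀ) := by
    have hsurj : Function.Surjective ((X * Xᵀ).mulVecLin) := by
      rw [← LinearMap.range_eq_top]
      apply Submodule.eq_top_of_finrank_eq
      rw [← Matrix.rank, hrank]
      simp [Module.finrank_pi]
    have hinj : Function.Injective ((X * Xᵀ).mulVecLin) :=
      (LinearMap.injective_iff_surjective).2 hsurj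
    exact Matrix.mulVec_injective_iff_isUnit.1 hinj
  -- hence cm (X * Xᵀ) is invertible over ℂ
  have hdet : IsUnit ((X * Xᵀ).det) := (Matrix.isUnit_iff_isUnit_det _).1 hunit
  have hdetC : IsUnit ((cm (X * Xᵀ)).det) := by
    rw [cm_det]
    simpa [isUnit_iff_ne_zero, Complex.ofReal_eq_zero] using
      (isUnit_iff_ne_zero.1 hdet)
  have hinvC : Invertible (cm (X * Xᵀ)) := (cm (X * Xᵀ)).invertibleOfIsUnitDet hdetC
  -- injectivity of mulVec of (cm X)ᴴ
  have hinjH : Function.Injective ((cm X)ᴴ.mulVec) := by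
    intro a b hab
    have h2 : cm (X * Xᵀ) *ᵥ a = cm (X * Xᵀ) *ᵥ b := by
      rw [cm_mul, ← cm_conjTranspose, ← Matrix.mulVec_mulVec, ← Matrix.mulVec_mulVec, hab]
    exact (Matrix.mulVec_injective_of_invertible (cm (X * Xᵀ))) h2
  -- the conjugated input part is posdef
  have h1 : (cm X * (cm V + Complex.I • cm (Om n)) * (cm X)ᴴ).PosDef :=
    posDef_mul_mul_conjTranspose hVpd (cm X) hinjH
  -- algebraic decomposition
  have key : cm (X * V * Xᵀ + Y) + Complex.I • cm (Om m)
      = cm X * (cm V + Complex.I • cm (Om n)) * (cm X)ᴴ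
        + (cm Y + Complex.I • cm (Om m)
            - Complex.I • (cm X * cm (Om n) * (cm X)ᵀ)) := by
    rw [cm_add, cm_mul, cm_mul, cm_conjTranspose, cm_transpose]
    rw [Matrix.mul_add, Matrix.add_mul, Matrix.mul_smul, Matrix.smul_mul]
    abel
  rw [key]
  exact h1.add_posSemidef hYcp
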